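/- Let f be convex on [l, r] with l < c < r where c = (l+r)/2, and suppose f(l) ∈ [u_l, v_l], f(c) ∈ [u_c, v_c], f(r) ∈ [u_r, v_r] where each interval has length at most ε and the three intervals have a common point. Then for every x ∈ [l, r], f(x) ≥ min(u_l, u_c, u_r) − 4ε; consequently for each y ∈ {l, c, r}, f(y) − inf_{x∈[l,r]} f(x) ≤ 6ε. -/

import Mathlib

theorem aux11 (a b Fx Fc Fr e : ℝ) (hab : a + b = 1) (hb0 : 0 ≤ b) (hba : b ≤ a)
    (he : 0 ≤ e) (hcv : Fc ≤ a * Fx + b * Fr) (hfr : Fr ≤ Fc + 2 * e) :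
    Fc - 2 * e ≤ Fx := by
  have h1 : 0 ≤ b * (Fc + 2 * e - Fr) := mul_nonneg hb0 (by linarith)
  have h2 : 0 ≤ (a - b) * e := mul_nonneg (by linarith) he
  have ha : (1:ℝ)/2 ≤ a := by linarith
  have hf2 : a * Fc + b * Fc = Fc := by rw [← add_mul, hab, one_mul]
  have hk : 0 ≤ a * (Fx - Fc + 2 * e) := by nlinarith [hcv, h1, h2, hf2]
  nlinarith [hk, ha]


/-- All three query points are `6ε`-near-optimal when the confidence intervals overlap. -/
theorem stmt11 (l r : ℝ) (hlr : l < r) (c : ℝ) (hc : c = (l + r) / 2)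
    (f : ℝ → ℝ) (hf : ConvexOn ℝ (Set.Icc l r) f) (ε : ℝ) (hε : 0 ≤ ε)
    (ul vl uc vc ur vr : ℝ)
    (hfl : f l ∈ Set.Icc ul vl) (hfc : f c ∈ Set.Icc uc vc) (hfr : f r ∈ Set.Icc ur vr)
    (hlenl : vl - ul ≤ ε) (hlenc : vc - uc ≤ ε) (hlenr : vr - ur ≤ ε)
    (hint : (Set.Icc ul vl ∩ Set.Icc uc vc ∩ Set.Icc ur vr).Nonempty) :
    (∀ x ∈ Set.Icc l r, min ul (min uc ur) - 4 * ε ≤ f x) ∧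
    (∀ y ∈ ({l, c, r} : Set ℝ), f y - sInf (f '' Set.Icc l r) ≤ 6 * ε) := by
  obtain ⟨t, ⟨⟨htl1, htl2⟩, ⟨htc1, htc2⟩⟩, htr1, htr2⟩ := hint
  obtain ⟨hfl1, hfl2⟩ := hfl
  obtain ⟨hfc1, hfc2⟩ := hfc
  obtain ⟨hfr1, hfr2⟩ := hfr
  have hlmem : l ∈ Set.Icc l r := ⟨le_refl l, le_of_lt hlr⟩
  have hrmem : r ∈ Set.Icc l r := ⟨le_of_lt hlr, le_refl r⟩
  have hcmem : c ∈ Set.Icc l r := by constructor <;> (rw [hc]; linarith)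
  set m := min ul (min uc ur) with hm
  have hmuc : m ≤ uc := le_trans (min_le_right _ _) (min_le_left _ _)
  have htm : t ≤ m + ε := by
    rcases min_cases ul (min uc ur) with ⟨h1, _⟩ | ⟨h1, _⟩
    · rw [hm, h1]; linarith
    · rcases min_cases uc ur with ⟨h2, _⟩ | ⟨h2, _⟩ <;> rw [hm, h1, h2] <;> linarith
  -- key: f x ≥ f c - 2ε for all x in [l, r]
  have key : ∀ x ∈ Set.Icc l r, f c - 2 * ε ≤ f x := by
    rintro x ⟨hx1, hx2⟩
    rcases le_or_gt x c with hxc | hxc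
    · have hcr : c < r := by rw [hc]; linarith
      have hd : 0 < r - x := by linarith
      have hb0 : (0:ℝ) ≤ (c - x) / (r - x) := by
        apply div_nonneg (by linarith) (le_of_lt hd)
      have ha0 : (0:ℝ) ≤ (r - c) / (r - x) := by
        apply div_nonneg (by rw [hc]; linarith) (le_of_lt hd)
      have hab : (r - c) / (r - x) + (c - x) / (r - x) = 1 := by
        field_simp; ring
      have hcv := hf.2 ⟨hx1, hx2⟩ hrmem ha0 hb0 hab
      simp only [smul_eq_mul] at hcv
      have hpt : (r - c) / (r - x) * x + (c - x) / (r - x) * r = c := by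
        field_simp; ring
      rw [hpt] at hcv
      have hba : (c - x) / (r - x) ≤ (r - c) / (r - x) :=
        div_le_div_of_nonneg_right (by rw [hc]; linarith) hd.le
      exact aux11 _ _ _ _ _ _ hab hb0 hba hε hcv (by linarith)
    · have hd : 0 < x - l := by
        rw [hc] at hxc; linarith
      have hb0 : (0:ℝ) ≤ (c - l) / (x - l) := by
        apply div_nonneg (by rw [hc]; linarith) (le_of_lt hd)
      have ha0 : (0:ℝ) ≤ (x - c) / (x - l) := by
        apply div_nonneg (by linarith) (le_of_lt hd)
      have hab : (x - c) / (x - l) + (c - l) / (x - l) = 1 := by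
        field_simp; ring
      have hcv := hf.2 hlmem ⟨hx1, hx2⟩ ha0 hb0 hab
      simp only [smul_eq_mul] at hcv
      have hpt : (x - c) / (x - l) * l + (c - l) / (x - l) * x = c := by
        field_simp; ring
      rw [hpt] at hcv
      have hba : (x - c) / (x - l) ≤ (c - l) / (x - l) :=
        div_le_div_of_nonneg_right (by rw [hc]; linarith) hd.le
      have hcv' : f c ≤ (c - l) / (x - l) * f x + (x - c) / (x - l) * f l := by
        linarith
      exact aux11 _ _ _ _ _ _ (by linarith) ha0 hba hε hcv' (by linarith)
  have part1 : ∀ x ∈ Set.Icc l r, m - 4 * ε ≤ f x := by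
    intro x hx
    have := key x hx
    linarith
  refine ⟨part1, ?_⟩
  have hne : (f '' Set.Icc l r).Nonempty := ⟨f l, ⟨l, hlmem, rfl⟩⟩
  have hInf : m - 4 * ε ≤ sInf (f '' Set.Icc l r) := by
    apply le_csInf hne
    rintro b ⟨x, hx, rfl⟩
    exact part1 x hx
  rintro y (rfl | rfl | rfl)
  · linarith
  · linarith
  · linarith
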